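/- Let X be a p \times n complex matrix with columns x_1, \dots, x_n, set r_j = x_j/\sqrt{n}, B = n^{-1} X X^* = \sum_{j=1}^n r_j r_j^*, and for z \in \mathbb{C} with \mathrm{Im}\, z > 0 let D(z) = B - z I_p and D_j(z) = D(z) - r_j r_j^*. Then \mathrm{tr}\big( (n^{-1} X^* X - z I_n)^{-1} \big) = -\frac{1}{z} \sum_{j=1}^n \big( 1 + r_j^* D_j(z)^{-1} r_j \big)^{-1}. -/

import Mathlib

open Matrix

lemma star_dot_self' {m : ℕ} (w : Fin m → ℂ) :
    star w ⬝ᵥ w = ((∑ i, Complex.normSq (w i) : ℝ) : ℂ) := by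
  simp [dotProduct, Complex.normSq_eq_conj_mul_self]

lemma aux_isUnit {m : ℕ} (M : Matrix (Fin m) (Fin m) ℂ) (z : ℂ) (hz : z.im ≠ 0)
    (hM : ∀ v : Fin m → ℂ, (star v ⬝ᵥ (M *ᵥ v)).im = 0) : IsUnit (M - z • 1) := by
  rw [Matrix.isUnit_iff_isUnit_det, isUnit_iff_ne_zero]
  intro hdet
  obtain ⟨v, hv0, hv⟩ := Matrix.exists_mulVec_eq_zero_iff.mpr hdet
  have h1 : M *ᵥ v = z • v := by
    rw [Matrix.sub_mulVec] at hv
    have h2 : (z • (1 : Matrix (Fin m) (Fin m) ℂ)) *ᵥ v = z • v := by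
      simp [Matrix.smul_mulVec]
    rw [h2] at hv
    linear_combination (norm := module) hv
  have h2 : star v ⬝ᵥ (M *ᵥ v) = z * ((∑ i, Complex.normSq (v i) : ℝ) : ℂ) := by
    rw [h1, dotProduct_smul, star_dot_self', smul_eq_mul]
  have h3 := hM v
  rw [h2] at h3
  simp [Complex.mul_im] at h3
  have hS : (∑ i, Complex.normSq (v i)) = 0 := by tauto
  apply hv0
  funext i
  have := (Finset.sum_eq_zero_iff_of_nonneg
    (fun i _ => Complex.normSq_nonneg (v i))).mp hS i (Finset.mem_univ i)
  simpa using Complex.normSq_eq_zero.mp this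

lemma vecMulVec_mulVec' {m k : ℕ} (a : Fin m → ℂ) (b v : Fin k → ℂ) :
    vecMulVec a b *ᵥ v = (b ⬝ᵥ v) • a := by
  funext i
  simp only [vecMulVec_apply, mulVec, dotProduct, Pi.smul_apply, smul_eq_mul, Finset.sum_mul]
  exact Finset.sum_congr rfl fun x _ => by ring

lemma dot_conj' {m : ℕ} (v w : Fin m → ℂ) :
    star v ⬝ᵥ w = (starRingEnd ℂ) (star w ⬝ᵥ v) := by
  simp [dotProduct, map_sum, mul_comm]

lemma quad_gram_left {p n : ℕ} (X : Matrix (Fin p) (Fin n) ℂ) (v : Fin n → ℂ) :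
    star v ⬝ᵥ ((Xᴴ * X) *ᵥ v) = star (X *ᵥ v) ⬝ᵥ (X *ᵥ v) := by
  rw [← Matrix.mulVec_mulVec, Matrix.dotProduct_mulVec, ← Matrix.star_mulVec]

lemma quad_gram_right {p n : ℕ} (X : Matrix (Fin p) (Fin n) ℂ) (v : Fin p → ℂ) :
    star v ⬝ᵥ ((X * Xᴴ) *ᵥ v) = star (Xᴴ *ᵥ v) ⬝ᵥ (Xᴴ *ᵥ v) := by
  have h : star v ᵥ* X = star (Xᴴ *ᵥ v) := by
    rw [Matrix.star_mulVec, Matrix.conjTranspose_conjTranspose]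
  rw [← Matrix.mulVec_mulVec, Matrix.dotProduct_mulVec, h]

/-- With `r_j = x_j/√n` the scaled columns of `X`, `B = n⁻¹ X X*`,
`D(z) = B - zI_p`, `D_j(z) = D(z) - r_j r_j*`, and `Im z > 0`,
`tr((n⁻¹ X*X - z I_n)⁻¹) = -(1/z) ∑_j (1 + r_j* D_j(z)⁻¹ r_j)⁻¹`. -/
theorem trace_companion_resolvent_eq_sum_beta {p n : ℕ} (X : Matrix (Fin p) (Fin n) ℂ)
    (z : ℂ) (hz : 0 < z.im) (r : Fin n → Fin p → ℂ)
    (hr : ∀ j i, r j i = X i j / (Real.sqrt n : ℂ)) :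
    Matrix.trace (((n : ℂ)⁻¹ • (Xᴴ * X) - z • (1 : Matrix (Fin n) (Fin n) ℂ))⁻¹)
      = -(1 / z) * ∑ j : Fin n,
          (1 + star (r j) ⬝ᵥ
            ((((n : ℂ)⁻¹ • (X * Xᴴ) - z • (1 : Matrix (Fin p) (Fin p) ℂ))
                - vecMulVec (r j) (star (r j)))⁻¹ *ᵥ (r j)))⁻¹ := by
  have hzim : z.im ≠ 0 := ne_of_gt hz
  have hz0 : z ≠ 0 := fun h => by simp [h] at hz
  set A := (n : ℂ)⁻¹ • (Xᴴ * X) - z • (1 : Matrix (Fin n) (Fin n) ℂ) with hA_def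
  set D := (n : ℂ)⁻¹ • (X * Xᴴ) - z • (1 : Matrix (Fin p) (Fin p) ℂ) with hD_def
  have hcast : ∀ (S : ℝ), ((n : ℂ)⁻¹ * (S : ℂ)).im = 0 := by
    intro S
    have : (n : ℂ)⁻¹ * (S : ℂ) = (((n : ℝ)⁻¹ * S : ℝ) : ℂ) := by push_cast; ring
    rw [this, Complex.ofReal_im]
  -- invertibility of A
  have hAunit : IsUnit A := by
    apply aux_isUnit _ z hzim
    intro v
    rw [Matrix.smul_mulVec, dotProduct_smul, smul_eq_mul, quad_gram_left,
      star_dot_self']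
    exact hcast _
  -- invertibility of D
  have hDunit : IsUnit D := by
    apply aux_isUnit _ z hzim
    intro v
    rw [Matrix.smul_mulVec, dotProduct_smul, smul_eq_mul, quad_gram_right,
      star_dot_self']
    exact hcast _
  -- invertibility of the D_j
  have hDjunit : ∀ j : Fin n,
      IsUnit ((n : ℂ)⁻¹ • (X * Xᴴ) - vecMulVec (r j) (star (r j)) - z • 1) := by
    intro j
    apply aux_isUnit _ z hzim
    intro v
    rw [Matrix.sub_mulVec, dotProduct_sub, Matrix.smul_mulVec, dotProduct_smul,
      smul_eq_mul, quad_gram_right, star_dot_self', vecMulVec_mulVec', dotProduct_smul,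
      smul_eq_mul, dot_conj' v (r j)]
    have : (star (r j) ⬝ᵥ v) * (starRingEnd ℂ) (star (r j) ⬝ᵥ v)
        = (Complex.normSq (star (r j) ⬝ᵥ v) : ℂ) := Complex.mul_conj _
    rw [this, Complex.sub_im, hcast, Complex.ofReal_im, sub_zero]
  have hAdet : IsUnit A.det := (Matrix.isUnit_iff_isUnit_det _).mp hAunit
  have hDdet : IsUnit D.det := (Matrix.isUnit_iff_isUnit_det _).mp hDunit
  -- intertwining
  have hXA : X * A = D * X := by
    rw [hA_def, hD_def]
    simp only [Matrix.mul_sub, Matrix.sub_mul, Matrix.mul_smul, Matrix.smul_mul,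
      Matrix.mul_one, Matrix.one_mul, Matrix.mul_assoc]
  have hXAinv : X * A⁻¹ = D⁻¹ * X := by
    calc X * A⁻¹ = D⁻¹ * D * (X * A⁻¹) := by rw [Matrix.nonsing_inv_mul D hDdet, Matrix.one_mul]
    _ = D⁻¹ * (D * X * A⁻¹) := by simp only [Matrix.mul_assoc]
    _ = D⁻¹ * (X * A * A⁻¹) := by rw [hXA]
    _ = D⁻¹ * (X * (A * A⁻¹)) := by simp only [Matrix.mul_assoc]
    _ = D⁻¹ * X := by rw [Matrix.mul_nonsing_inv A hAdet, Matrix.mul_one]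
  -- formula for A⁻¹
  have hAinv_eq : A⁻¹ = z⁻¹ • ((n : ℂ)⁻¹ • (Xᴴ * (D⁻¹ * X)) - 1) := by
    have h := Matrix.mul_nonsing_inv A hAdet
    nth_rewrite 1 [hA_def] at h
    rw [Matrix.sub_mul, Matrix.smul_mul, Matrix.smul_mul, Matrix.one_mul,
      Matrix.mul_assoc, hXAinv] at h
    rw [sub_eq_iff_eq_add'] at h
    have h4 : z • A⁻¹ = (n : ℂ)⁻¹ • (Xᴴ * (D⁻¹ * X)) - 1 := by
      rw [eq_sub_iff_add_eq]
      exact h.symm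
    rw [← h4, inv_smul_smul₀ hz0]
  -- entrywise formula
  have hentry : ∀ j : Fin n, (n : ℂ)⁻¹ * (Xᴴ * (D⁻¹ * X)) j j
      = star (r j) ⬝ᵥ (D⁻¹ *ᵥ r j) := by
    intro j
    have hs : ((Real.sqrt n : ℂ))⁻¹ * ((Real.sqrt n : ℂ))⁻¹ = (n : ℂ)⁻¹ := by
      rw [← mul_inv, ← Complex.ofReal_mul, Real.mul_self_sqrt (Nat.cast_nonneg n)]
      push_cast
      ring
    simp only [Matrix.mul_apply, Matrix.mulVec, dotProduct, Matrix.conjTranspose_apply,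
      Pi.star_apply, hr, RCLike.star_def, Finset.mul_sum]
    apply Finset.sum_congr rfl
    intro i _
    apply Finset.sum_congr rfl
    intro k _
    rw [map_div₀, Complex.conj_ofReal, div_eq_mul_inv, div_eq_mul_inv, ← hs]
    ring
  -- Sherman–Morrison per index
  have hSM : ∀ j : Fin n, star (r j) ⬝ᵥ (D⁻¹ *ᵥ r j) - 1
      = -(1 + star (r j) ⬝ᵥ ((D - vecMulVec (r j) (star (r j)))⁻¹ *ᵥ r j))⁻¹ := by
    intro j
    set Dj := D - vecMulVec (r j) (star (r j)) with hDj_def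
    have hDjunit' : IsUnit Dj := by
      have := hDjunit j
      have heq : Dj = (n : ℂ)⁻¹ • (X * Xᴴ) - vecMulVec (r j) (star (r j)) - z • 1 := by
        rw [hDj_def, hD_def]; abel
      rwa [heq]
    have hDjdet : IsUnit Dj.det := (Matrix.isUnit_iff_isUnit_det _).mp hDjunit'
    set w := Dj⁻¹ *ᵥ r j with hw_def
    set β := star (r j) ⬝ᵥ w with hβ_def
    have hDjw : Dj *ᵥ w = r j := by
      rw [hw_def, Matrix.mulVec_mulVec, Matrix.mul_nonsing_inv Dj hDjdet, Matrix.one_mulVec]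
    have hDw : D *ᵥ w = (1 + β) • r j := by
      have hDsum : D = Dj + vecMulVec (r j) (star (r j)) := by rw [hDj_def]; abel
      rw [hDsum, Matrix.add_mulVec, hDjw, vecMulVec_mulVec', ← hβ_def, add_smul, one_smul]
    have hβne : (1 : ℂ) + β ≠ 0 := by
      intro h0
      have hw0 : w = 0 := by
        have hD0 : D *ᵥ w = 0 := by rw [hDw, h0, zero_smul]
        calc w = (D⁻¹ * D) *ᵥ w := by rw [Matrix.nonsing_inv_mul D hDdet, Matrix.one_mulVec]
        _ = D⁻¹ *ᵥ (D *ᵥ w) := by rw [← Matrix.mulVec_mulVec]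
        _ = 0 := by rw [hD0, Matrix.mulVec_zero]
      rw [hβ_def, hw0, dotProduct_zero] at h0
      simp at h0
    have hDinvr : D⁻¹ *ᵥ r j = (1 + β)⁻¹ • w := by
      have h1 : D⁻¹ *ᵥ (D *ᵥ w) = w := by
        rw [Matrix.mulVec_mulVec, Matrix.nonsing_inv_mul D hDdet, Matrix.one_mulVec]
      rw [hDw, Matrix.mulVec_smul] at h1
      rw [← h1, smul_smul, inv_mul_cancel₀ hβne, one_smul]
    rw [hDinvr, dotProduct_smul, smul_eq_mul, ← hβ_def]
    field_simp
    ring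
  -- putting it together
  rw [hAinv_eq]
  rw [Matrix.trace]
  simp only [Matrix.diag_apply, Matrix.smul_apply, Matrix.sub_apply, Matrix.one_apply_eq,
    smul_eq_mul]
  rw [show -(1/z) * ∑ j : Fin n, (1 + star (r j) ⬝ᵥ ((D - vecMulVec (r j) (star (r j)))⁻¹ *ᵥ r j))⁻¹
      = ∑ j : Fin n, -(1/z) * (1 + star (r j) ⬝ᵥ ((D - vecMulVec (r j) (star (r j)))⁻¹ *ᵥ r j))⁻¹
      from by rw [Finset.mul_sum]]
  apply Finset.sum_congr rfl
  intro j _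
  rw [hentry j, hSM j]
  field_simp
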